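/- Let V be a finite-dimensional real vector space and φ an endomorphism of V. If a and b are both cyclic vectors of φ, then there exists a real polynomial p such that the endomorphism p(φ) is invertible and p(φ)(a) = b. -/
import Mathlib


/-- If `a` and `b` are both cyclic vectors of an endomorphism `φ` of a
finite-dimensional real vector space `V`, then there is a real polynomial `p` such that
`p(φ)` is invertible and `p(φ)(a) = b`. -/
theorem cyclic_vectors_related_by_invertible_polynomial
    (V : Type*) [AddCommGroup V] [Module ℝ V] [FiniteDimensional ℝ V]
    (φ : V →ₗ[ℝ] V) (a b : V)
    (ha : Submodule.span ℝ (Set.range fun k : ℕ => (φ ^ k) a) = ⊤)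
    (hb : Submodule.span ℝ (Set.range fun k : ℕ => (φ ^ k) b) = ⊤) :
    ∃ p : Polynomial ℝ, IsUnit (Polynomial.aeval φ p) ∧ (Polynomial.aeval φ p) a = b := by
  set L : Polynomial ℝ →ₗ[ℝ] V :=
    (LinearMap.applyₗ a).comp (Polynomial.aeval φ).toLinearMap with hL
  have hrange : Submodule.span ℝ (Set.range fun k : ℕ => (φ ^ k) a) ≤ LinearMap.range L := by
    rw [Submodule.span_le]
    rintro _ ⟨k, rfl⟩
    exact ⟨Polynomial.X ^ k, by simp [hL]⟩
  have hb' : b ∈ LinearMap.range L := hrange (ha ▸ Submodule.mem_top)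
  obtain ⟨q, hq⟩ := hb'
  have hqa : (Polynomial.aeval φ) q a = b := hq
  have hcomm : ∀ k : ℕ, (Polynomial.aeval φ) q * φ ^ k = φ ^ k * (Polynomial.aeval φ) q := by
    intro k
    have h1 : (Polynomial.aeval φ) ((Polynomial.X : Polynomial ℝ) ^ k) = φ ^ k := by simp
    rw [← h1, ← map_mul, ← map_mul, mul_comm]
  have hsurj : Function.Surjective ((Polynomial.aeval φ) q) := by
    rw [← LinearMap.range_eq_top, eq_top_iff, ← hb, Submodule.span_le]
    rintro _ ⟨k, rfl⟩
    refine ⟨(φ ^ k) a, ?_⟩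
    have := congrArg (fun f : V →ₗ[ℝ] V => f a) (hcomm k)
    simpa [hqa] using this
  exact ⟨q, (LinearMap.isUnit_iff_range_eq_top _).mpr (LinearMap.range_eq_top.mpr hsurj), hqa⟩
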